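/- For each r ∈ (0,1), the partial products ∏_{j=1}^{n} B_j(z) converge uniformly on the closed disc D_r as n → ∞ to a function B that is holomorphic on the open disc {|z| < r} and bounded on D_r. -/

import Mathlib

open Filter Topology

lemma aux_prod_sub_one_le (u : ℕ → ℂ) (s : Finset ℕ) :
    ‖(∏ j ∈ s, u j) - 1‖ ≤ (∏ j ∈ s, (1 + ‖u j - 1‖)) - 1 := by
  classical
  induction s using Finset.induction_on with
  | empty => simp
  | @insert a s ha ih =>
    rw [Finset.prod_insert ha, Finset.prod_insert ha]
    set P := ∏ j ∈ s, u j
    set Q := ∏ j ∈ s, (1 + ‖u j - 1‖) with hQdef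
    have hQ1 : (1:ℝ) ≤ Q := by
      have h := Finset.prod_le_prod (s := s) (f := fun _ : ℕ => (1:ℝ))
        (g := fun j => 1 + ‖u j - 1‖) (fun j _ => zero_le_one)
        (fun j _ => le_add_of_nonneg_right (norm_nonneg _))
      simpa using h
    have hPQ : ‖P‖ ≤ Q := by
      have : P = (P - 1) + 1 := by ring
      rw [this]
      calc ‖(P - 1) + 1‖ ≤ ‖P - 1‖ + ‖(1:ℂ)‖ := norm_add_le _ _
        _ ≤ (Q - 1) + 1 := by rw [norm_one]; linarith [ih]
        _ = Q := by ring
    calc ‖u a * P - 1‖ = ‖(u a - 1) * P + (P - 1)‖ := by congr 1; ring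
      _ ≤ ‖(u a - 1) * P‖ + ‖P - 1‖ := norm_add_le _ _
      _ = ‖u a - 1‖ * ‖P‖ + ‖P - 1‖ := by rw [norm_mul]
      _ ≤ ‖u a - 1‖ * Q + (Q - 1) := by
          have := norm_nonneg (u a - 1)
          have := ih
          nlinarith
      _ = (1 + ‖u a - 1‖) * Q - 1 := by ring

lemma aux_prod_le_exp (ε : ℕ → ℝ) (hε : ∀ j, 0 ≤ ε j) (s : Finset ℕ) :
    ∏ j ∈ s, (1 + ε j) ≤ Real.exp (∑ j ∈ s, ε j) := by
  rw [Real.exp_sum]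
  exact Finset.prod_le_prod (fun j _ => by linarith [hε j])
    (fun j _ => by linarith [Real.add_one_le_exp (ε j)])

lemma aux_uniform_prod (u : ℕ → ℂ → ℂ) (S : Set ℂ) (ε : ℕ → ℝ)
    (hεnn : ∀ j, 0 ≤ ε j) (hsum : Summable ε)
    (hb : ∀ j, ∀ z ∈ S, ‖u j z - 1‖ ≤ ε j) :
    ∃ P : ℂ → ℂ,
      TendstoUniformlyOn (fun n z => ∏ j ∈ Finset.Icc 1 n, u j z) P atTop S ∧
      ∀ z ∈ S, ‖P z‖ ≤ Real.exp (∑' j, ε j) := by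
  classical
  set T := ∑' j, ε j with hT
  set M := Real.exp T with hM
  set F : ℕ → ℂ → ℂ := fun n z => ∏ j ∈ Finset.Icc 1 n, u j z with hF
  have hTnn : 0 ≤ T := tsum_nonneg hεnn
  -- bound on partial products
  have hprodle : ∀ (s : Finset ℕ) (z), z ∈ S →
      (∏ j ∈ s, (1 + ‖u j z - 1‖)) ≤ Real.exp (∑ j ∈ s, ε j) := by
    intro s z hz
    refine le_trans (Finset.prod_le_prod (fun j _ => by positivity)
      (fun j _ => by linarith [hb j z hz])) (aux_prod_le_exp ε hεnn s)
  have hsumle : ∀ s : Finset ℕ, ∑ j ∈ s, ε j ≤ T :=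
    fun s => Summable.sum_le_tsum s (fun i _ => hεnn i) hsum
  have hFb : ∀ n z, z ∈ S → ‖F n z‖ ≤ M := by
    intro n z hz
    have h1 : ‖F n z - 1‖ ≤ Real.exp (∑ j ∈ Finset.Icc 1 n, ε j) - 1 := by
      refine (aux_prod_sub_one_le (fun j => u j z) _).trans ?_
      have := hprodle (Finset.Icc 1 n) z hz
      linarith
    have h2 : Real.exp (∑ j ∈ Finset.Icc 1 n, ε j) ≤ M :=
      Real.exp_le_exp.2 (hsumle _)
    calc ‖F n z‖ = ‖(F n z - 1) + 1‖ := by congr 1; ring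
      _ ≤ ‖F n z - 1‖ + ‖(1:ℂ)‖ := norm_add_le _ _
      _ ≤ M := by rw [norm_one]; linarith
  -- tail bound
  set t : ℕ → ℝ := fun n => T - ∑ j ∈ Finset.range (n + 1), ε j with ht
  have htnn : ∀ n, 0 ≤ t n := fun n => by
    have := Summable.sum_le_tsum (Finset.range (n+1)) (fun i _ => hεnn i) hsum
    simp only [ht]; linarith
  have httend : Tendsto t atTop (𝓝 0) := by
    have h1 : Tendsto (fun n => ∑ j ∈ Finset.range (n+1), ε j) atTop (𝓝 T) :=
      (hsum.hasSum.tendsto_sum_nat).comp (tendsto_add_atTop_nat 1)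
    have h2 := Tendsto.sub (tendsto_const_nhds : Tendsto (fun _ : ℕ => T) atTop (𝓝 T)) h1
    simpa using h2
  have hIoc : ∀ n m : ℕ, ∑ j ∈ Finset.Ioc n m, ε j ≤ t n := by
    intro n m
    have hdisj : Disjoint (Finset.Ioc n m) (Finset.range (n + 1)) := by
      rw [Finset.disjoint_left]
      intro j hj hj'
      simp only [Finset.mem_Ioc] at hj
      simp only [Finset.mem_range] at hj'
      omega
    have := Summable.sum_le_tsum (Finset.Ioc n m ∪ Finset.range (n + 1)) (fun i _ => hεnn i) hsum
    rw [Finset.sum_union hdisj] at this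
    simp only [ht]; linarith
  -- Cauchy estimate
  have hdist : ∀ n m z, n ≤ m → z ∈ S →
      dist (F m z) (F n z) ≤ M * (Real.exp (t n) - 1) := by
    intro n m z hnm hz
    have hsplit : F m z = F n z * ∏ j ∈ Finset.Ioc n m, u j z := by
      simp only [hF]
      have e : ∀ k : ℕ, Finset.Icc 1 k = Finset.Ioc 0 k := fun k => by
        rw [← Finset.Icc_add_one_left_eq_Ioc]; rfl
      rw [e, e]
      exact (Finset.prod_Ioc_consecutive (fun j => u j z) (Nat.zero_le n) hnm).symm
    have hG : ‖(∏ j ∈ Finset.Ioc n m, u j z) - 1‖ ≤ Real.exp (t n) - 1 := by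
      refine (aux_prod_sub_one_le (fun j => u j z) _).trans ?_
      have h1 := hprodle (Finset.Ioc n m) z hz
      have h2 : Real.exp (∑ j ∈ Finset.Ioc n m, ε j) ≤ Real.exp (t n) :=
        Real.exp_le_exp.2 (hIoc n m)
      linarith
    rw [dist_eq_norm, hsplit]
    calc ‖F n z * ∏ j ∈ Finset.Ioc n m, u j z - F n z‖
        = ‖F n z‖ * ‖(∏ j ∈ Finset.Ioc n m, u j z) - 1‖ := by
          rw [← norm_mul]; congr 1; ring
      _ ≤ M * (Real.exp (t n) - 1) := by
          have h0 : (0:ℝ) ≤ ‖F n z‖ := norm_nonneg _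
          have h1 := hFb n z hz
          have h2 : (0:ℝ) ≤ Real.exp (t n) - 1 := by
            have := Real.one_le_exp (htnn n); linarith
          nlinarith [norm_nonneg ((∏ j ∈ Finset.Ioc n m, u j z) - 1)]
  have hcauchy : UniformCauchySeqOn F atTop S := by
    rw [Metric.uniformCauchySeqOn_iff]
    intro δ hδ
    have hδtend : Tendsto (fun n => M * (Real.exp (t n) - 1)) atTop (𝓝 0) := by
      have : Tendsto (fun n => M * (Real.exp (t n) - 1)) atTop (𝓝 (M * (Real.exp 0 - 1))) :=
        (tendsto_const_nhds.mul ((Real.continuous_exp.tendsto 0).comp httend |>.sub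
          tendsto_const_nhds))
      simpa using this
    obtain ⟨N, hN⟩ := (hδtend.eventually (eventually_lt_nhds hδ)).exists_forall_of_atTop
    refine ⟨N, fun m hm n hn z hz => ?_⟩
    rcases le_total n m with h | h
    · exact lt_of_le_of_lt (hdist n m z h hz) (hN n hn)
    · rw [dist_comm]; exact lt_of_le_of_lt (hdist m n z h hz) (hN m hm)
  set P : ℂ → ℂ := fun z => limUnder atTop (fun n => F n z) with hP
  have hptw : ∀ z ∈ S, Tendsto (fun n => F n z) atTop (𝓝 (P z)) := by
    intro z hz
    exact (hcauchy.cauchySeq hz).tendsto_limUnder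
  refine ⟨P, hcauchy.tendstoUniformlyOn_of_tendsto hptw, fun z hz => ?_⟩
  exact le_of_tendsto ((hptw z hz).norm) (Eventually.of_forall fun n => hFb n z hz)

set_option maxHeartbeats 1000000 in
/-- For each `r ∈ (0,1)`, the partial products `∏_{j=1}^{n} B_j(z)` converge
uniformly on the closed disc `D_r` to a function `B` that is holomorphic on `{|z| < r}`
and bounded on `D_r`. -/
theorem stmt_6
    (p : ℕ → ℝ) (hp0 : p 0 = 0) (hp1 : 0 < p 1) (hp1' : p 1 < 1)
    (hpnn : ∀ k, 0 ≤ p k) (hpsum : ∑' k, p k = 1)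
    (hmean : Summable fun k : ℕ => (k : ℝ) * p k)
    (a : ℝ) (ha : a = ∑' k : ℕ, (k : ℝ) * p k) (ha1 : 1 < a)
    (f : ℂ → ℂ) (hf : ∀ z : ℂ, ‖z‖ ≤ 1 → f z = ∑' n, (p n : ℂ) * z ^ n)
    (fIter : ℕ → ℂ → ℂ) (hf0 : ∀ z, fIter 0 z = z)
    (hfS : ∀ n z, fIter (n + 1) z = f (fIter n z))
    (q : ℕ → ℝ) (hq0 : q 0 = 0) (hqnn : ∀ k, 0 ≤ q k) (hqsum : ∑' k, q k = 1)
    (ν : ℕ) (hν : 0 < q ν) (hνmin : ∀ i, 0 < q i → ν ≤ i)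
    (B : ℕ → ℂ → ℂ)
    (hB : ∀ n z, B n z =
      1 + (q ν : ℂ)⁻¹ * ∑' l : ℕ, if ν < l then (q l : ℂ) * fIter n z ^ (l - ν) else 0)
    (r : ℝ) (hr0 : 0 < r) (hr1 : r < 1) :
    ∃ Blim : ℂ → ℂ,
      TendstoUniformlyOn (fun n z => ∏ j ∈ Finset.Icc 1 n, B j z) Blim atTop
        {z : ℂ | ‖z‖ ≤ r} ∧
      DifferentiableOn ℂ Blim {z : ℂ | ‖z‖ < r} ∧
      ∃ M : ℝ, ∀ z : ℂ, ‖z‖ ≤ r → ‖Blim z‖ ≤ M := by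
  classical
  have hSp : Summable p := by
    by_contra h
    rw [tsum_eq_zero_of_not_summable h] at hpsum
    norm_num at hpsum
  have hSq : Summable q := by
    by_contra h
    rw [tsum_eq_zero_of_not_summable h] at hqsum
    norm_num at hqsum
  set c : ℝ := p 1 + (1 - p 1) * r with hc
  have hc0 : 0 < c := by nlinarith
  have hc1 : c < 1 := by nlinarith
  have hcn1 : ∀ n : ℕ, c ^ n ≤ 1 := fun n => pow_le_one₀ hc0.le hc1.le
  -- the basic contraction estimate for f
  have hfb : ∀ z : ℂ, ‖z‖ ≤ r → ‖f z‖ ≤ c * ‖z‖ := by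
    intro z hz
    have hz1 : ‖z‖ ≤ 1 := hz.trans hr1.le
    rw [hf z hz1]
    have hnorm : ∀ n : ℕ, ‖(p n : ℂ) * z ^ n‖ = p n * ‖z‖ ^ n := by
      intro n
      rw [norm_mul, norm_pow, Complex.norm_real, Real.norm_eq_abs, abs_of_nonneg (hpnn n)]
    have hSnorm : Summable fun n => ‖(p n : ℂ) * z ^ n‖ := by
      refine Summable.of_nonneg_of_le (fun n => norm_nonneg _) (fun n => ?_) hSp
      rw [hnorm n]
      have h1 : ‖z‖ ^ n ≤ 1 := pow_le_one₀ (norm_nonneg z) hz1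
      nlinarith [hpnn n]
    set g : ℕ → ℝ := fun n =>
      p n * (r * ‖z‖) + (if n = 1 then p 1 * ‖z‖ - p 1 * (r * ‖z‖) else 0) with hg
    have hSg1 : Summable fun n => p n * (r * ‖z‖) := hSp.mul_right _
    have hSg2 : Summable fun n : ℕ =>
        (if n = 1 then p 1 * ‖z‖ - p 1 * (r * ‖z‖) else 0) :=
      (hasSum_ite_eq 1 _).summable
    have hterm : ∀ n, ‖(p n : ℂ) * z ^ n‖ ≤ g n := by
      intro n
      rw [hnorm n]
      rcases n with _ | n
      · simp [hg, hp0]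
      rcases n with _ | k
      · have hgv : g 1 = p 1 * ‖z‖ := by
          simp only [hg]
          norm_num
        rw [hgv, pow_one]
      · simp only [hg]
        rw [if_neg (by omega)]
        have h1 : ‖z‖ ^ (k+1) ≤ r ^ (k+1) := pow_le_pow_left₀ (norm_nonneg z) hz _
        have h2 : r ^ (k+1) ≤ r ^ 1 := pow_le_pow_of_le_one hr0.le hr1.le (by omega)
        rw [pow_succ]
        have h3 : ‖z‖ ^ (k+1) * ‖z‖ ≤ r * ‖z‖ := by
          rw [pow_one] at h2
          nlinarith [norm_nonneg z]
        nlinarith [hpnn (k+2), norm_nonneg z, pow_nonneg (norm_nonneg z) (k+1)]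
    calc ‖∑' n, (p n : ℂ) * z ^ n‖ ≤ ∑' n, ‖(p n : ℂ) * z ^ n‖ :=
          norm_tsum_le_tsum_norm hSnorm
      _ ≤ ∑' n, g n := Summable.tsum_le_tsum hterm hSnorm (hSg1.add hSg2)
      _ = (∑' n, p n * (r * ‖z‖)) +
          ∑' n : ℕ, (if n = 1 then p 1 * ‖z‖ - p 1 * (r * ‖z‖) else 0) :=
          Summable.tsum_add hSg1 hSg2
      _ = c * ‖z‖ := by
          rw [tsum_mul_right, hpsum, tsum_ite_eq]; ring
  -- iterated estimate
  have hfiter : ∀ n : ℕ, ∀ z : ℂ, ‖z‖ ≤ r → ‖fIter n z‖ ≤ c ^ n * ‖z‖ := by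
    intro n
    induction n with
    | zero => intro z hz; rw [hf0]; simp
    | succ n ih =>
      intro z hz
      rw [hfS]
      have h1 : ‖fIter n z‖ ≤ r := by
        have h := ih z hz
        nlinarith [hcn1 n, norm_nonneg z, pow_nonneg hc0.le n]
      calc ‖f (fIter n z)‖ ≤ c * ‖fIter n z‖ := hfb _ h1
        _ ≤ c * (c ^ n * ‖z‖) := by nlinarith [ih z hz]
        _ = c ^ (n+1) * ‖z‖ := by ring
  -- the epsilon sequence
  set ε : ℕ → ℝ := fun n => (q ν)⁻¹ * r * c ^ n with hεdef
  have hqνinv : 0 ≤ (q ν)⁻¹ := inv_nonneg.2 (hqnn ν)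
  have hεnn : ∀ n, 0 ≤ ε n := fun n => by simp only [hεdef]; positivity
  have hεsum : Summable ε := (summable_geometric_of_lt_one hc0.le hc1).mul_left _
  -- bound on B j z - 1
  have hBb : ∀ j : ℕ, ∀ z ∈ {z : ℂ | ‖z‖ ≤ r}, ‖B j z - 1‖ ≤ ε j := by
    intro j z hz
    simp only [Set.mem_setOf_eq] at hz
    rw [hB]
    rw [add_sub_cancel_left]
    set w := fIter j z with hw
    have hwr : ‖w‖ ≤ c ^ j * r := by
      have h := hfiter j z hz
      nlinarith [pow_nonneg hc0.le j]
    have hw1 : ‖w‖ ≤ 1 := hwr.trans (by nlinarith [hcn1 j])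
    have hterm : ∀ l : ℕ,
        ‖(if ν < l then (q l : ℂ) * w ^ (l - ν) else 0)‖ ≤ q l * ‖w‖ := by
      intro l
      split_ifs with h
      · rw [norm_mul, norm_pow, Complex.norm_real, Real.norm_eq_abs,
          abs_of_nonneg (hqnn l)]
        have h1 : ‖w‖ ^ (l - ν) ≤ ‖w‖ := by
          calc ‖w‖ ^ (l - ν) ≤ ‖w‖ ^ 1 :=
                pow_le_pow_of_le_one (norm_nonneg w) hw1 (by omega)
            _ = ‖w‖ := pow_one _
        nlinarith [hqnn l, norm_nonneg w]
      · simp only [norm_zero]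
        exact mul_nonneg (hqnn l) (norm_nonneg w)
    have hSmaj : Summable fun l => q l * ‖w‖ := hSq.mul_right _
    have hSnorm : Summable fun l =>
        ‖(if ν < l then (q l : ℂ) * w ^ (l - ν) else 0)‖ :=
      Summable.of_nonneg_of_le (fun _ => norm_nonneg _) hterm hSmaj
    calc ‖(q ν : ℂ)⁻¹ * ∑' l : ℕ, (if ν < l then (q l : ℂ) * w ^ (l - ν) else 0)‖
        = (q ν)⁻¹ * ‖∑' l : ℕ, (if ν < l then (q l : ℂ) * w ^ (l - ν) else 0)‖ := by
          rw [norm_mul, norm_inv, Complex.norm_real, Real.norm_eq_abs,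
            abs_of_nonneg (hqnn ν)]
      _ ≤ (q ν)⁻¹ * ∑' l, q l * ‖w‖ := by
          refine mul_le_mul_of_nonneg_left ?_ hqνinv
          exact (norm_tsum_le_tsum_norm hSnorm).trans (Summable.tsum_le_tsum hterm hSnorm hSmaj)
      _ = (q ν)⁻¹ * ‖w‖ := by rw [tsum_mul_right, hqsum, one_mul]
      _ ≤ (q ν)⁻¹ * (c ^ j * r) := mul_le_mul_of_nonneg_left hwr hqνinv
      _ = ε j := by rw [hεdef]; ring
  -- apply the general product lemma
  obtain ⟨P, hconv, hbound⟩ :=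
    aux_uniform_prod B {z : ℂ | ‖z‖ ≤ r} ε hεnn hεsum hBb
  -- differentiability
  set U : Set ℂ := {z : ℂ | ‖z‖ < r} with hU
  have hUopen : IsOpen U := isOpen_lt continuous_norm continuous_const
  set r'' : ℝ := (1 + r) / 2 with hr''
  have hrr'' : r < r'' := by simp only [hr'']; linarith
  have hr''1 : r'' < 1 := by simp only [hr'']; linarith
  have hr''0 : 0 < r'' := by simp only [hr'']; linarith
  have hSpr : Summable fun n => p n * r'' ^ n := by
    refine Summable.of_nonneg_of_le
      (fun n => mul_nonneg (hpnn n) (pow_nonneg hr''0.le n)) (fun n => ?_) hSp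
    have h1 : r'' ^ n ≤ 1 := pow_le_one₀ hr''0.le hr''1.le
    nlinarith [hpnn n]
  have hhd : DifferentiableOn ℂ (fun w : ℂ => ∑' n, (p n : ℂ) * w ^ n)
      (Metric.ball 0 r'') := by
    refine Complex.differentiableOn_tsum_of_summable_norm hSpr
      (fun n => ((differentiable_const _).mul (differentiable_pow n)).differentiableOn)
      Metric.isOpen_ball (fun n w hw => ?_)
    rw [norm_mul, norm_pow, Complex.norm_real, Real.norm_eq_abs, abs_of_nonneg (hpnn n)]
    have hwn : ‖w‖ < r'' := by rwa [mem_ball_zero_iff] at hw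
    have h1 : ‖w‖ ^ n ≤ r'' ^ n := pow_le_pow_left₀ (norm_nonneg w) hwn.le n
    nlinarith [hpnn n]
  have hiter_small : ∀ j : ℕ, ∀ z ∈ U, ‖fIter j z‖ < r := by
    intro j z hz
    simp only [hU, Set.mem_setOf_eq] at hz
    have h := hfiter j z hz.le
    calc ‖fIter j z‖ ≤ c ^ j * ‖z‖ := h
      _ ≤ 1 * ‖z‖ := by nlinarith [hcn1 j, norm_nonneg z]
      _ = ‖z‖ := one_mul _
      _ < r := hz
  have hfiterd : ∀ j : ℕ, DifferentiableOn ℂ (fIter j) U := by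
    intro j
    induction j with
    | zero => exact differentiableOn_id.congr fun z _ => hf0 z
    | succ j ih =>
      have hmaps : ∀ z ∈ U, fIter j z ∈ Metric.ball (0:ℂ) r'' := by
        intro z hz
        rw [mem_ball_zero_iff]
        exact (hiter_small j z hz).trans hrr''
      have hcomp : DifferentiableOn ℂ
          ((fun w : ℂ => ∑' n, (p n : ℂ) * w ^ n) ∘ fIter j) U :=
        hhd.comp ih hmaps
      refine hcomp.congr fun z hz => ?_
      have h1 : ‖fIter j z‖ ≤ 1 := ((hiter_small j z hz).trans hr1).le
      rw [hfS j z, hf _ h1]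
      rfl
  have hgd : DifferentiableOn ℂ
      (fun w : ℂ => ∑' l : ℕ, if ν < l then (q l : ℂ) * w ^ (l - ν) else 0)
      (Metric.ball 0 1) := by
    refine Complex.differentiableOn_tsum_of_summable_norm hSq (fun l => ?_)
      Metric.isOpen_ball (fun l w hw => ?_)
    · by_cases h : ν < l
      · simp only [if_pos h]
        exact ((differentiable_const _).mul (differentiable_pow _)).differentiableOn
      · simp only [if_neg h]
        exact differentiableOn_const 0
    · rw [mem_ball_zero_iff] at hw
      split_ifs with h
      · rw [norm_mul, norm_pow, Complex.norm_real, Real.norm_eq_abs,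
          abs_of_nonneg (hqnn l)]
        have h1 : ‖w‖ ^ (l - ν) ≤ 1 := pow_le_one₀ (norm_nonneg w) hw.le
        nlinarith [hqnn l]
      · simp only [norm_zero]
        exact hqnn l
  have hBd : ∀ j : ℕ, DifferentiableOn ℂ (B j) U := by
    intro j
    have hBe : B j = fun z => 1 + (q ν : ℂ)⁻¹ *
        ∑' l : ℕ, if ν < l then (q l : ℂ) * fIter j z ^ (l - ν) else 0 :=
      funext fun z => hB j z
    rw [hBe]
    refine (differentiableOn_const _).add ((differentiableOn_const _).mul ?_)
    have hmaps : ∀ z ∈ U, fIter j z ∈ Metric.ball (0:ℂ) 1 := by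
      intro z hz
      rw [mem_ball_zero_iff]
      exact (hiter_small j z hz).trans hr1
    exact hgd.comp (hfiterd j) hmaps
  have hproddiff : ∀ n : ℕ,
      DifferentiableOn ℂ (fun z => ∏ j ∈ Finset.Icc 1 n, B j z) U := by
    intro n
    induction n with
    | zero =>
      have he : Finset.Icc 1 0 = (∅ : Finset ℕ) := by
        apply Finset.Icc_eq_empty; omega
      simp only [he, Finset.prod_empty]
      exact differentiableOn_const 1
    | succ n ih =>
      have he : ∀ z : ℂ, ∏ j ∈ Finset.Icc 1 (n+1), B j z =
          (∏ j ∈ Finset.Icc 1 n, B j z) * B (n+1) z :=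
        fun z => Finset.prod_Icc_succ_top (by omega) _
      exact (ih.mul (hBd (n+1))).congr fun z _ => he z
  have hsub : U ⊆ {z : ℂ | ‖z‖ ≤ r} := by
    intro z hz
    simp only [hU, Set.mem_setOf_eq] at hz ⊢
    exact hz.le
  have hPd : DifferentiableOn ℂ P U :=
    ((hconv.mono hsub).tendstoLocallyUniformlyOn).differentiableOn
      (Eventually.of_forall hproddiff) hUopen
  exact ⟨P, hconv, hPd, Real.exp (∑' j, ε j), fun z hz => hbound z hz⟩
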